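/- arXiv:2403.15264 — 3 statements merged into one kernel-verified Lean document; each statement's English description precedes it below -/
import Mathlib

section
/- Let Q ∈ ℝ^{q×q} be symmetric and C ∈ ℝ^{q×m}. Then the following are equivalent: (i) for every nonzero v ∈ ℝ^q with Cᵀv = 0 one has vᵀQv < 0; (ii) there exists ρ ≥ 0 such that the matrix Q − ρ·CCᵀ is negative definite. -/
open Matrix

private lemma cont_quad {q : ℕ} (A : Matrix (Fin q) (Fin q) ℝ) :
    Continuous fun v : Fin q → ℝ => v ⬝ᵥ (A *ᵥ v) := by
  simp only [dotProduct, Matrix.mulVec]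
  exact continuous_finset_sum _ fun i _ =>
    (continuous_apply i).mul (continuous_finset_sum _ fun j _ =>
      continuous_const.mul (continuous_apply j))

private lemma quad_homog {q : ℕ} (A : Matrix (Fin q) (Fin q) ℝ) (c : ℝ) (v : Fin q → ℝ) :
    (c • v) ⬝ᵥ (A *ᵥ (c • v)) = c * (c * (v ⬝ᵥ (A *ᵥ v))) := by
  rw [Matrix.mulVec_smul, smul_dotProduct, dotProduct_smul]
  ring_nf

private lemma gram_eq {q m : ℕ} (C : Matrix (Fin q) (Fin m) ℝ) (v : Fin q → ℝ) :
    v ⬝ᵥ ((C * Cᵀ) *ᵥ v) = (Cᵀ *ᵥ v) ⬝ᵥ (Cᵀ *ᵥ v) := by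
  rw [← Matrix.mulVec_mulVec, Matrix.dotProduct_mulVec, ← Matrix.mulVec_transpose]

/-- Finsler-type lemma: for symmetric `Q ∈ ℝ^{q×q}` and `C ∈ ℝ^{q×m}`,
the kernel-constrained negativity `Cᵀv = 0, v ≠ 0 ⟹ vᵀQv < 0` is equivalent to the
existence of `ρ ≥ 0` such that `Q − ρ·CCᵀ` is negative definite. -/
theorem finsler_lemma {q m : ℕ} (Q : Matrix (Fin q) (Fin q) ℝ) (hQ : Q.IsSymm)
    (C : Matrix (Fin q) (Fin m) ℝ) :
    (∀ v : Fin q → ℝ, v ≠ 0 → Cᵀ *ᵥ v = 0 → v ⬝ᵥ (Q *ᵥ v) < 0) ↔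
      (∃ ρ : ℝ, 0 ≤ ρ ∧
        ∀ v : Fin q → ℝ, v ≠ 0 → v ⬝ᵥ ((Q - ρ • (C * Cᵀ)) *ᵥ v) < 0) := by
  set f : (Fin q → ℝ) → ℝ := fun v => v ⬝ᵥ (Q *ᵥ v) with hf
  set g : (Fin q → ℝ) → ℝ := fun v => v ⬝ᵥ ((C * Cᵀ) *ᵥ v) with hg
  have hgnn : ∀ v, 0 ≤ g v := fun v => by
    rw [show g v = (Cᵀ *ᵥ v) ⬝ᵥ (Cᵀ *ᵥ v) from gram_eq C v, dotProduct]
    exact Finset.sum_nonneg fun i _ => mul_self_nonneg _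
  have hgzero : ∀ v, g v = 0 ↔ Cᵀ *ᵥ v = 0 := fun v => by
    rw [show g v = (Cᵀ *ᵥ v) ⬝ᵥ (Cᵀ *ᵥ v) from gram_eq C v]; exact dotProduct_self_eq_zero
  have hsplit : ∀ (ρ : ℝ) (v : Fin q → ℝ),
      v ⬝ᵥ ((Q - ρ • (C * Cᵀ)) *ᵥ v) = f v - ρ * g v := by
    intro ρ v
    rw [Matrix.sub_mulVec, dotProduct_sub, Matrix.smul_mulVec,
      dotProduct_smul, smul_eq_mul]
  constructor
  · intro H
    -- hard direction
    by_cases hS : ∃ v : Fin q → ℝ, ‖v‖ = 1 ∧ 0 ≤ f v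
    · -- S nonempty
      set S : Set (Fin q → ℝ) := Metric.sphere 0 1 ∩ {v | 0 ≤ f v} with hSdef
      have hScompact : IsCompact S :=
        (isCompact_sphere (0 : Fin q → ℝ) 1).inter_right
          (isClosed_le continuous_const (cont_quad Q))
      have hSne : S.Nonempty := by
        obtain ⟨v, hv1, hv2⟩ := hS
        exact ⟨v, by simp [hSdef, mem_sphere_zero_iff_norm, hv1], hv2⟩
      obtain ⟨a, haS, hamin⟩ := hScompact.exists_isMinOn hSne ((cont_quad (C * Cᵀ)).continuousOn)
      obtain ⟨b, hbS, hbmax⟩ := hScompact.exists_isMaxOn hSne ((cont_quad Q).continuousOn)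
      have hane : a ≠ 0 := by
        intro h0
        have := haS.1
        rw [mem_sphere_zero_iff_norm] at this
        simp [h0] at this
      have hga : 0 < g a := by
        rcases lt_or_eq_of_le (hgnn a) with h | h
        · exact h
        · exfalso
          have hker : Cᵀ *ᵥ a = 0 := (hgzero a).1 h.symm
          exact absurd haS.2 (not_le.2 (H a hane hker))
      have hMnn : 0 ≤ f b := le_trans hbS.2 le_rfl
      set ρ := (f b + 1) / g a with hρ
      have hρpos : 0 < ρ := div_pos (by linarith) hga
      refine ⟨ρ, hρpos.le, ?_⟩
      have key : ∀ v : Fin q → ℝ, ‖v‖ = 1 → f v - ρ * g v < 0 := by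
        intro v hv
        by_cases hfv : 0 ≤ f v
        · have hvS : v ∈ S := ⟨by simp [hSdef, mem_sphere_zero_iff_norm, hv], hfv⟩
          have h1 : f v ≤ f b := hbmax hvS
          have h2 : g a ≤ g v := hamin hvS
          have h3 : ρ * g a ≤ ρ * g v := mul_le_mul_of_nonneg_left h2 hρpos.le
          have h4 : ρ * g a = f b + 1 := by
            rw [hρ, div_mul_cancel₀]; exact hga.ne'
          linarith
        · push_neg at hfv
          nlinarith [hgnn v, hρpos]
      intro v hv
      rw [hsplit]
      have hn : ‖v‖ ≠ 0 := norm_ne_zero_iff.2 hv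
      have hu : ‖(‖v‖⁻¹ • v)‖ = 1 := by
        rw [norm_smul, norm_inv, norm_norm, inv_mul_cancel₀ hn]
      have := key _ hu
      have hfu : f (‖v‖⁻¹ • v) = ‖v‖⁻¹ * (‖v‖⁻¹ * f v) := quad_homog Q _ v
      have hgu : g (‖v‖⁻¹ • v) = ‖v‖⁻¹ * (‖v‖⁻¹ * g v) := quad_homog (C * Cᵀ) _ v
      rw [hfu, hgu] at this
      have hpos : 0 < ‖v‖⁻¹ * ‖v‖⁻¹ := by positivity
      nlinarith
    · -- S empty: ρ = 0
      push_neg at hS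
      refine ⟨0, le_rfl, ?_⟩
      intro v hv
      rw [hsplit]
      simp only [zero_mul, sub_zero]
      have hn : ‖v‖ ≠ 0 := norm_ne_zero_iff.2 hv
      have hu : ‖(‖v‖⁻¹ • v)‖ = 1 := by
        rw [norm_smul, norm_inv, norm_norm, inv_mul_cancel₀ hn]
      have := hS _ hu
      have hfu : f (‖v‖⁻¹ • v) = ‖v‖⁻¹ * (‖v‖⁻¹ * f v) := quad_homog Q _ v
      rw [hfu] at this
      have hpos : 0 < ‖v‖⁻¹ * ‖v‖⁻¹ := by positivity
      nlinarith
  · intro ⟨ρ, hρ, H⟩ v hv hker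
    have := H v hv
    rw [hsplit] at this
    have : f v - ρ * g v < 0 := this
    have hg0 : g v = 0 := (hgzero v).2 hker
    rw [hg0, mul_zero, sub_zero] at this
    exact this
end

section
/- Let M : ℝ → Sym(n,ℝ) be differentiable with values in symmetric positive-semidefinite matrices, let A : ℝ → ℝ^{n×n}, B : ℝ → ℝ^{n×m}, ρ : ℝ → ℝ, λ > 0, and suppose that for all t ≥ t₀ and all v ∈ ℝⁿ: vᵀ( M'(t) + M(t)A(t) + A(t)ᵀM(t) − ρ(t)·M(t)B(t)B(t)ᵀM(t) )v ≤ −2λ·vᵀM(t)v. If δx : ℝ → ℝⁿ is differentiable and satisfies δx'(t) = A(t)δx(t) − (ρ(t)/2)·B(t)B(t)ᵀM(t)δx(t) for all t ≥ t₀, then δx(t)ᵀM(t)δx(t) ≤ e^{−2λ(t−t₀)} · δx(t₀)ᵀM(t₀)δx(t₀) for all t ≥ t₀. -/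
open Matrix

attribute [local instance] Matrix.normedAddCommGroup Matrix.normedSpace

private lemma matrix_entry_hasDerivAt {n : ℕ} (M : ℝ → Matrix (Fin n) (Fin n) ℝ)
    (hM : Differentiable ℝ M) (i j : Fin n) (t : ℝ) :
    HasDerivAt (fun s => M s i j) (deriv M t i j) t :=
  (((ContinuousLinearMap.proj j).comp (ContinuousLinearMap.proj (R := ℝ)
      (φ := fun _ : Fin n => (Fin n → ℝ)) i)).hasFDerivAt.comp_hasDerivAt t (hM t).hasDerivAt)

private lemma vec_entry_hasDerivAt {n : ℕ} (x : ℝ → Fin n → ℝ)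
    (hx : Differentiable ℝ x) (i : Fin n) (t : ℝ) :
    HasDerivAt (fun s => x s i) (deriv x t i) t :=
  ((ContinuousLinearMap.proj (R := ℝ) (φ := fun _ : Fin n => ℝ) i).hasFDerivAt.comp_hasDerivAt
    t (hx t).hasDerivAt)

private lemma energy_hasDerivAt {n : ℕ} (M : ℝ → Matrix (Fin n) (Fin n) ℝ)
    (hM : Differentiable ℝ M) (x : ℝ → Fin n → ℝ) (hx : Differentiable ℝ x) (t : ℝ) :
    HasDerivAt (fun s => x s ⬝ᵥ (M s *ᵥ x s))
      (deriv x t ⬝ᵥ (M t *ᵥ x t) + x t ⬝ᵥ (deriv M t *ᵥ x t)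
        + x t ⬝ᵥ (M t *ᵥ deriv x t)) t := by
  simp only [dotProduct, mulVec, Finset.mul_sum, Finset.sum_add_distrib]
  rw [← Finset.sum_add_distrib, ← Finset.sum_add_distrib]
  apply HasDerivAt.fun_sum
  intro i _
  have h1 : HasDerivAt (fun s => x s i) (deriv x t i) t := vec_entry_hasDerivAt x hx i t
  have h2 : HasDerivAt (fun s => ∑ j, M s i j * x s j)
      (∑ j, (deriv M t i j * x t j + M t i j * deriv x t j)) t := by
    apply HasDerivAt.fun_sum
    intro j _
    exact (matrix_entry_hasDerivAt M hM i j t).mul (vec_entry_hasDerivAt x hx j t)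
  have := h1.fun_mul h2
  convert this using 1
  · rfl
  · funext y
    rw [Finset.mul_sum]
  · rw [Finset.mul_sum, Finset.mul_sum, ← Finset.sum_add_distrib, ← Finset.sum_add_distrib,
      ← Finset.sum_add_distrib]
    exact Finset.sum_congr rfl fun j _ => by ring

private lemma dot_shift {n : ℕ} (A : Matrix (Fin n) (Fin n) ℝ) (u w : Fin n → ℝ) :
    (A *ᵥ u) ⬝ᵥ w = u ⬝ᵥ (Aᵀ *ᵥ w) := by
  rw [dotProduct_comm, dotProduct_mulVec, mulVec_transpose, dotProduct_comm]

/-- exponential decay of the differential energy `δxᵀMδx` along the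
closed-loop differential dynamics `δx' = Aδx − (ρ/2)BBᵀMδx`, provided the
contraction matrix inequality
`M' + MA + AᵀM − ρ·MBBᵀM ≤ −2λM` holds for all `t ≥ t₀`. -/
theorem energy_exponential_decay {n m : ℕ}
    (M : ℝ → Matrix (Fin n) (Fin n) ℝ)
    (A : ℝ → Matrix (Fin n) (Fin n) ℝ) (B : ℝ → Matrix (Fin n) (Fin m) ℝ)
    (ρ : ℝ → ℝ) (lam t₀ : ℝ) (hlam : 0 < lam)
    (hMdiff : Differentiable ℝ M)
    (hMsymm : ∀ s, (M s).IsSymm) (hMpsd : ∀ s, (M s).PosSemidef)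
    (hineq : ∀ t ≥ t₀, ∀ v : Fin n → ℝ,
      v ⬝ᵥ ((deriv M t + M t * A t + (A t)ᵀ * M t
        - ρ t • (M t * B t * (B t)ᵀ * M t)) *ᵥ v) ≤ -(2 * lam) * (v ⬝ᵥ (M t *ᵥ v)))
    (δx : ℝ → Fin n → ℝ) (hδxdiff : Differentiable ℝ δx)
    (hδx : ∀ t ≥ t₀, deriv δx t
      = A t *ᵥ δx t - (ρ t / 2) • ((B t * (B t)ᵀ * M t) *ᵥ δx t)) :
    ∀ t ≥ t₀, δx t ⬝ᵥ (M t *ᵥ δx t)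
      ≤ Real.exp (-(2 * lam) * (t - t₀)) * (δx t₀ ⬝ᵥ (M t₀ *ᵥ δx t₀)) := by
  set V : ℝ → ℝ := fun s => δx s ⬝ᵥ (M s *ᵥ δx s) with hV
  have hVder : ∀ t, HasDerivAt V
      (deriv δx t ⬝ᵥ (M t *ᵥ δx t) + δx t ⬝ᵥ (deriv M t *ᵥ δx t)
        + δx t ⬝ᵥ (M t *ᵥ deriv δx t)) t :=
    fun t => energy_hasDerivAt M hMdiff δx hδxdiff t
  -- key differential inequality
  have hkey : ∀ t ≥ t₀,
      deriv δx t ⬝ᵥ (M t *ᵥ δx t) + δx t ⬝ᵥ (deriv M t *ᵥ δx t)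
        + δx t ⬝ᵥ (M t *ᵥ deriv δx t) ≤ -(2 * lam) * V t := by
    intro t ht
    have heq : deriv δx t ⬝ᵥ (M t *ᵥ δx t) + δx t ⬝ᵥ (deriv M t *ᵥ δx t)
        + δx t ⬝ᵥ (M t *ᵥ deriv δx t)
        = δx t ⬝ᵥ ((deriv M t + M t * A t + (A t)ᵀ * M t
            - ρ t • (M t * B t * (B t)ᵀ * M t)) *ᵥ δx t) := by
      have hsymm : (M t)ᵀ = M t := hMsymm t
      simp only [hδx t ht, sub_dotProduct, smul_dotProduct, mulVec_sub, dotProduct_sub,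
        mulVec_smul, dotProduct_smul, dot_shift, transpose_mul, transpose_transpose, hsymm,
        mulVec_mulVec, add_mulVec, sub_mulVec, smul_mulVec, dotProduct_add,
        Matrix.mul_assoc, smul_eq_mul]
      ring
    rw [heq]
    exact hineq t ht (δx t)
  -- Grönwall via monotonicity of g s = exp(2 lam s) * V s
  set g : ℝ → ℝ := fun s => Real.exp (2 * lam * s) * V s with hg
  have hgder : ∀ t, HasDerivAt g
      (2 * lam * Real.exp (2 * lam * t) * V t
        + Real.exp (2 * lam * t) * (deriv δx t ⬝ᵥ (M t *ᵥ δx t)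
          + δx t ⬝ᵥ (deriv M t *ᵥ δx t) + δx t ⬝ᵥ (M t *ᵥ deriv δx t))) t := by
    intro t
    have he : HasDerivAt (fun s => Real.exp (2 * lam * s)) (2 * lam * Real.exp (2 * lam * t)) t := by
      have h2 := ((hasDerivAt_id t).const_mul (2 * lam)).exp
      convert h2 using 1
      all_goals simp only [id_eq, mul_one]
      ring
    exact he.mul (hVder t)
  have hanti : AntitoneOn g (Set.Ici t₀) := by
    apply antitoneOn_of_deriv_nonpos (convex_Ici t₀)
    · exact fun t _ => (hgder t).continuousAt.continuousWithinAt
    · intro t _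
      exact (hgder t).differentiableAt.differentiableWithinAt
    · intro t ht
      rw [interior_Ici] at ht
      rw [(hgder t).deriv]
      have h1 := hkey t (le_of_lt ht)
      have h2 : Real.exp (2 * lam * t) * (deriv δx t ⬝ᵥ (M t *ᵥ δx t)
          + δx t ⬝ᵥ (deriv M t *ᵥ δx t) + δx t ⬝ᵥ (M t *ᵥ deriv δx t))
          ≤ Real.exp (2 * lam * t) * (-(2 * lam) * V t) :=
        mul_le_mul_of_nonneg_left h1 (Real.exp_pos _).le
      nlinarith [Real.exp_pos (2 * lam * t)]
  intro t ht
  have hgle : g t ≤ g t₀ := hanti (Set.self_mem_Ici) ht ht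
  have : Real.exp (2 * lam * t) * V t ≤ Real.exp (2 * lam * t₀) * V t₀ := hgle
  have hfin : V t ≤ Real.exp (-(2 * lam) * (t - t₀)) * V t₀ := by
    rw [show -(2 * lam) * (t - t₀) = 2 * lam * t₀ - 2 * lam * t by ring, Real.exp_sub]
    rw [div_mul_eq_mul_div, le_div_iff₀ (Real.exp_pos _)]
    linarith [this]
  exact hfin
end

section
/- Let S ∈ ℝ^{n×q}, 𝔐 ∈ ℝ^{q×q} symmetric, and constants a₁, a₂, σ₁, σ₂ > 0 satisfy a₁·wᵀw ≤ wᵀ𝔐w ≤ a₂·wᵀw and σ₁²·wᵀw ≤ wᵀ(SᵀS)w ≤ σ₂²·wᵀw for all w ∈ ℝ^q. Define M := P_S 𝔐 P_Sᵀ with P_S = S(SᵀS)⁻¹. Then for every v ∈ ℝ^q, the vector δx := S·v satisfies (a₁/σ₂²)·‖δx‖² ≤ δxᵀ M δx ≤ (a₂/σ₁²)·‖δx‖², where ‖·‖ is the Euclidean 2-norm. -/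
open Matrix

/-- if `a₁ I ≤ 𝔐 ≤ a₂ I` and `σ₁² I ≤ SᵀS ≤ σ₂² I` (quadratic-form
bounds), then the metric `M = P_S 𝔐 P_Sᵀ` with `P_S = S(SᵀS)⁻¹` satisfies
`(a₁/σ₂²)‖δx‖² ≤ δxᵀMδx ≤ (a₂/σ₁²)‖δx‖²` for every tangent vector `δx = S·v`,
where `‖δx‖² = δxᵀδx` is the squared Euclidean 2-norm. -/
theorem reduced_metric_uniform_bounds {n q : ℕ}
    (S : Matrix (Fin n) (Fin q) ℝ) (𝔐 : Matrix (Fin q) (Fin q) ℝ)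
    (h𝔐 : 𝔐.IsSymm) (a₁ a₂ σ₁ σ₂ : ℝ)
    (ha₁ : 0 < a₁) (ha₂ : 0 < a₂) (hσ₁ : 0 < σ₁) (hσ₂ : 0 < σ₂)
    (h𝔐low : ∀ w : Fin q → ℝ, a₁ * (w ⬝ᵥ w) ≤ w ⬝ᵥ (𝔐 *ᵥ w))
    (h𝔐up : ∀ w : Fin q → ℝ, w ⬝ᵥ (𝔐 *ᵥ w) ≤ a₂ * (w ⬝ᵥ w))
    (hSlow : ∀ w : Fin q → ℝ, σ₁ ^ 2 * (w ⬝ᵥ w) ≤ w ⬝ᵥ ((Sᵀ * S) *ᵥ w))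
    (hSup : ∀ w : Fin q → ℝ, w ⬝ᵥ ((Sᵀ * S) *ᵥ w) ≤ σ₂ ^ 2 * (w ⬝ᵥ w))
    (v : Fin q → ℝ) :
    a₁ / σ₂ ^ 2 * ((S *ᵥ v) ⬝ᵥ (S *ᵥ v))
        ≤ (S *ᵥ v) ⬝ᵥ (((S * (Sᵀ * S)⁻¹) * 𝔐 * (S * (Sᵀ * S)⁻¹)ᵀ) *ᵥ (S *ᵥ v)) ∧
      (S *ᵥ v) ⬝ᵥ (((S * (Sᵀ * S)⁻¹) * 𝔐 * (S * (Sᵀ * S)⁻¹)ᵀ) *ᵥ (S *ᵥ v))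
        ≤ a₂ / σ₁ ^ 2 * ((S *ᵥ v) ⬝ᵥ (S *ᵥ v)) := by
  set G := Sᵀ * S with hGdef
  have hGsymm : Gᵀ = G := by simp [hGdef, Matrix.transpose_mul]
  -- G is positive definite, hence invertible
  have hGpd : G.PosDef := by
    refine Matrix.PosDef.of_dotProduct_mulVec_pos (by simpa [Matrix.IsHermitian] using hGsymm) fun x hx => ?_
    have hxx : 0 < x ⬝ᵥ x := by
      simpa using dotProduct_self_star_pos_iff.mpr hx
    calc (0:ℝ) < σ₁ ^ 2 * (x ⬝ᵥ x) := by positivity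
    _ ≤ x ⬝ᵥ (G *ᵥ x) := hSlow x
    _ = star x ⬝ᵥ (G *ᵥ x) := by simp
  have hGdetUnit : IsUnit G.det := hGpd.det_pos.ne'.isUnit
  have hGinvG : G⁻¹ * G = 1 := nonsing_inv_mul G hGdetUnit
  have hGGinv : G * G⁻¹ = 1 := mul_nonsing_inv G hGdetUnit
  have hGinvsymm : (G⁻¹)ᵀ = G⁻¹ := by rw [Matrix.transpose_nonsing_inv, hGsymm]
  -- key matrix identity
  have hM : Sᵀ * ((S * G⁻¹) * 𝔐 * (S * G⁻¹)ᵀ) * S = 𝔐 := by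
    rw [Matrix.transpose_mul, hGinvsymm]
    calc Sᵀ * ((S * G⁻¹) * 𝔐 * (G⁻¹ * Sᵀ)) * S
        = ((Sᵀ * S) * G⁻¹) * 𝔐 * (G⁻¹ * (Sᵀ * S)) := by simp only [Matrix.mul_assoc]
      _ = 𝔐 := by rw [← hGdef, hGGinv, hGinvG, Matrix.one_mul, Matrix.mul_one]
  -- the quadratic form equals v ⬝ᵥ 𝔐 v
  have key : (S *ᵥ v) ⬝ᵥ (((S * G⁻¹) * 𝔐 * (S * G⁻¹)ᵀ) *ᵥ (S *ᵥ v)) = v ⬝ᵥ (𝔐 *ᵥ v) := by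
    conv_rhs => rw [← hM, Matrix.mul_assoc (Sᵀ), ← Matrix.mulVec_mulVec,
      Matrix.dotProduct_mulVec, Matrix.vecMul_transpose]
    rw [Matrix.mulVec_mulVec]
  -- squared norm of S v
  have hnorm : (S *ᵥ v) ⬝ᵥ (S *ᵥ v) = v ⬝ᵥ (G *ᵥ v) := by
    rw [hGdef, ← Matrix.mulVec_mulVec, Matrix.dotProduct_mulVec v Sᵀ,
      Matrix.vecMul_transpose]
  rw [key, hnorm]
  have h1 := hSlow v
  have h2 := hSup v
  have h3 := h𝔐low v
  have h4 := h𝔐up v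
  have hvv : 0 ≤ v ⬝ᵥ v := by
    exact Finset.sum_nonneg fun i _ => mul_self_nonneg (v i)
  constructor
  · rw [div_mul_eq_mul_div, div_le_iff₀ (by positivity)]
    nlinarith
  · rw [div_mul_eq_mul_div, le_div_iff₀ (by positivity)]
    nlinarith
end
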